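/- Let d ≥ 1, let μ : ℝ^d → [0,∞) be a Lebesgue-measurable integrable function, and let τ be a probability measure on the unit sphere 𝕊^{d-1} ⊂ ℝ^d. For x ∈ ℝ^d and v ∈ 𝕊^{d-1} set Z(x,v) = ∫_ℝ μ(x + s·v) ds, and define K(x,v,h) = μ(x)·μ(x + h·v)/Z(x,v) whenever 0 < Z(x,v) < ∞, and K(x,v,h) = 0 otherwise. Then for all Borel sets A, B ⊂ ℝ^d, ∫_{ℝ^d} ∫_{𝕊^{d-1}} ∫_ℝ 1_A(x)·1_B(x + h·v)·K(x,v,h) dh dτ(v) dx = ∫_{ℝ^d} ∫_{𝕊^{d-1}} ∫_ℝ 1_B(x)·1_A(x + h·v)·K(x,v,h) dh dτ(v) dx. (This is the reversibility of the generalized Hit-and-Run transition kernel with respect to the target measure with density μ.) -/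

import Mathlib

open MeasureTheory
open scoped ENNReal

section HitAndRunAux

variable {d : ℕ}

local notation "E" => EuclideanSpace ℝ (Fin d)
local notation "S" => Metric.sphere (0 : EuclideanSpace ℝ (Fin d)) 1

/-- The normalizing constant of hit-and-run. -/
noncomputable def hrZ (μ : E → ℝ) (x : E) (v : S) : ℝ≥0∞ :=
  ∫⁻ s : ℝ, ENNReal.ofReal (μ (x + s • (↑v : E)))

open Classical in
/-- The hit-and-run kernel integrand. -/
noncomputable def hrK (μ : E → ℝ) (x : E) (v : S) (h : ℝ) : ℝ :=
  if 0 < hrZ μ x v ∧ hrZ μ x v < ⊤ then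
    μ x * μ (x + h • (↑v : E)) / (hrZ μ x v).toReal
  else 0

lemma hr_measurable_addsmul :
    Measurable fun p : E × S × ℝ => p.1 + p.2.2 • (↑p.2.1 : E) := by
  fun_prop

lemma hrZ_measurable {μ : E → ℝ} (hμ : Measurable μ) :
    Measurable fun q : E × S => hrZ μ q.1 q.2 := by
  have : Measurable (Function.uncurry fun (q : E × S) (s : ℝ) =>
      ENNReal.ofReal (μ (q.1 + s • (↑q.2 : E)))) := by
    apply ENNReal.measurable_ofReal.comp
    apply hμ.comp
    fun_prop
  exact this.lintegral_prod_right

lemma hrK_measurable {μ : E → ℝ} (hμ : Measurable μ) :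
    Measurable fun p : E × S × ℝ => hrK μ p.1 p.2.1 p.2.2 := by
  have mZ : Measurable fun p : E × S × ℝ => hrZ μ p.1 p.2.1 :=
    (hrZ_measurable hμ).comp (measurable_fst.prodMk measurable_snd.fst)
  have hset : MeasurableSet {p : E × S × ℝ | 0 < hrZ μ p.1 p.2.1 ∧ hrZ μ p.1 p.2.1 < ⊤} := by
    have : {p : E × S × ℝ | 0 < hrZ μ p.1 p.2.1 ∧ hrZ μ p.1 p.2.1 < ⊤} =
        (fun p : E × S × ℝ => hrZ μ p.1 p.2.1) ⁻¹' {z | 0 < z ∧ z < ⊤} := rfl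
    rw [this]
    apply mZ
    have h2 : {z : ℝ≥0∞ | 0 < z ∧ z < ⊤} = {0}ᶜ ∩ {⊤}ᶜ := by
      ext z
      simp [pos_iff_ne_zero, lt_top_iff_ne_top]
    rw [h2]
    exact (measurableSet_singleton 0).compl.inter (measurableSet_singleton ⊤).compl
  unfold hrK
  exact Measurable.ite hset
    (((hμ.comp measurable_fst).mul (hμ.comp hr_measurable_addsmul)).div
      (ENNReal.measurable_toReal.comp mZ)) measurable_const

lemma hrZ_translate (μ : E → ℝ) (x : E) (v : S) (h : ℝ) :
    hrZ μ (x + h • (↑v : E)) v = hrZ μ x v := by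
  unfold hrZ
  have key : ∀ s : ℝ, x + h • (↑v : E) + s • (↑v : E) = x + (s + h) • (↑v : E) := by
    intro s
    rw [add_smul]
    abel
  simp_rw [key]
  exact lintegral_add_right_eq_self (fun s => ENNReal.ofReal (μ (x + s • (↑v : E)))) h

lemma hrK_nonneg {μ : E → ℝ} (hμnn : ∀ x, 0 ≤ μ x) (x : E) (v : S) (h : ℝ) :
    0 ≤ hrK μ x v h := by
  unfold hrK
  split
  · exact div_nonneg (mul_nonneg (hμnn _) (hμnn _)) ENNReal.toReal_nonneg
  · exact le_refl _

lemma hrK_symm (μ : E → ℝ) (x : E) (v : S) (h : ℝ) :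
    hrK μ (x + h • (↑v : E)) v (-h) = hrK μ x v h := by
  unfold hrK
  rw [hrZ_translate]
  have hx : x + h • (↑v : E) + (-h) • (↑v : E) = x := by
    rw [neg_smul]; abel
  rw [hx, mul_comm (μ (x + h • (↑v : E))) (μ x)]

lemma hrK_lintegral_le {μ : E → ℝ} (hμ : Measurable μ) (hμnn : ∀ x, 0 ≤ μ x)
    (x : E) (v : S) :
    ∫⁻ h : ℝ, ENNReal.ofReal (hrK μ x v h) ≤ ENNReal.ofReal (μ x) := by
  by_cases hc : 0 < hrZ μ x v ∧ hrZ μ x v < ⊤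
  · have htpos : 0 < (hrZ μ x v).toReal := ENNReal.toReal_pos hc.1.ne' hc.2.ne
    have hpt : ∀ h : ℝ, ENNReal.ofReal (hrK μ x v h) =
        ENNReal.ofReal (μ x) * (ENNReal.ofReal ((hrZ μ x v).toReal))⁻¹ *
          ENNReal.ofReal (μ (x + h • (↑v : E))) := by
      intro h
      unfold hrK
      rw [if_pos hc, ENNReal.ofReal_div_of_pos htpos, ENNReal.ofReal_mul (hμnn x),
        div_eq_mul_inv, mul_right_comm]
    simp_rw [hpt]
    rw [lintegral_const_mul _ (by
      apply ENNReal.measurable_ofReal.comp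
      apply hμ.comp
      fun_prop)]
    have hZ : (∫⁻ h : ℝ, ENNReal.ofReal (μ (x + h • (↑v : E)))) = hrZ μ x v := rfl
    rw [hZ, ENNReal.ofReal_toReal hc.2.ne, mul_assoc,
      ENNReal.inv_mul_cancel hc.1.ne' hc.2.ne, mul_one]
  · simp only [hrK, if_neg hc, ENNReal.ofReal_zero, lintegral_const, zero_mul]
    exact zero_le

lemma indicator_one_nonneg (C : Set E) (y : E) : 0 ≤ C.indicator (fun _ => (1 : ℝ)) y := by
  unfold Set.indicator; split <;> norm_num

lemma indicator_one_le (C : Set E) (y : E) : C.indicator (fun _ => (1 : ℝ)) y ≤ 1 := by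
  unfold Set.indicator; split <;> norm_num

lemma hr_inner_lintegral_le {μ : E → ℝ} (hμ : Measurable μ) (hμnn : ∀ x, 0 ≤ μ x)
    (A B : Set E) (x : E) (v : S) :
    ∫⁻ h : ℝ, ENNReal.ofReal (A.indicator (fun _ => (1 : ℝ)) x *
        B.indicator (fun _ => (1 : ℝ)) (x + h • (↑v : E)) * hrK μ x v h)
      ≤ ENNReal.ofReal (μ x) := by
  refine le_trans (lintegral_mono fun h => ENNReal.ofReal_le_ofReal ?_)
    (hrK_lintegral_le hμ hμnn x v)
  calc A.indicator (fun _ => (1 : ℝ)) x * B.indicator (fun _ => (1 : ℝ)) (x + h • (↑v : E))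
        * hrK μ x v h ≤ 1 * hrK μ x v h := by
        apply mul_le_mul_of_nonneg_right _ (hrK_nonneg hμnn x v h)
        exact mul_le_one₀ (indicator_one_le _ _) (indicator_one_nonneg _ _) (indicator_one_le _ _)
    _ = hrK μ x v h := one_mul _


lemma hr_masterP {μ : E → ℝ} (hμ : Measurable μ) {A B : Set E}
    (hA : MeasurableSet A) (hB : MeasurableSet B) :
    Measurable fun p : E × S × ℝ => ENNReal.ofReal (A.indicator (fun _ => (1 : ℝ)) p.1 *
      B.indicator (fun _ => (1 : ℝ)) (p.1 + p.2.2 • (↑p.2.1 : E)) * hrK μ p.1 p.2.1 p.2.2) := by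
  apply ENNReal.measurable_ofReal.comp
  exact (((measurable_const.indicator hA).comp measurable_fst).mul
    ((measurable_const.indicator hB).comp hr_measurable_addsmul)).mul (hrK_measurable hμ)

lemma hr_masterR {μ : E → ℝ} (hμ : Measurable μ) {A B : Set E}
    (hA : MeasurableSet A) (hB : MeasurableSet B) :
    Measurable fun p : E × S × ℝ => A.indicator (fun _ => (1 : ℝ)) p.1 *
      B.indicator (fun _ => (1 : ℝ)) (p.1 + p.2.2 • (↑p.2.1 : E)) * hrK μ p.1 p.2.1 p.2.2 :=
  (((measurable_const.indicator hA).comp measurable_fst).mul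
    ((measurable_const.indicator hB).comp hr_measurable_addsmul)).mul (hrK_measurable hμ)

lemma hrJ_measurable {μ : E → ℝ} (hμ : Measurable μ) {A B : Set E}
    (hA : MeasurableSet A) (hB : MeasurableSet B) :
    Measurable fun q : E × S => ∫⁻ h : ℝ, ENNReal.ofReal (A.indicator (fun _ => (1 : ℝ)) q.1 *
      B.indicator (fun _ => (1 : ℝ)) (q.1 + h • (↑q.2 : E)) * hrK μ q.1 q.2 h) := by
  have hm : Measurable (Function.uncurry fun (q : E × S) (h : ℝ) =>
      ENNReal.ofReal (A.indicator (fun _ => (1 : ℝ)) q.1 *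
        B.indicator (fun _ => (1 : ℝ)) (q.1 + h • (↑q.2 : E)) * hrK μ q.1 q.2 h)) :=
    (hr_masterP hμ hA hB).comp
      (measurable_fst.fst.prodMk (measurable_fst.snd.prodMk measurable_snd))
  exact hm.lintegral_prod_right

lemma hr_key {μ : E → ℝ} (hμ : Measurable μ) (hμnn : ∀ x, 0 ≤ μ x) {A B : Set E}
    (hA : MeasurableSet A) (hB : MeasurableSet B) (v : S) :
    (∫⁻ x : E, ∫⁻ h : ℝ, ENNReal.ofReal (A.indicator (fun _ => (1 : ℝ)) x *
        B.indicator (fun _ => (1 : ℝ)) (x + h • (↑v : E)) * hrK μ x v h))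
      = ∫⁻ x : E, ∫⁻ h : ℝ, ENNReal.ofReal (B.indicator (fun _ => (1 : ℝ)) x *
        A.indicator (fun _ => (1 : ℝ)) (x + h • (↑v : E)) * hrK μ x v h) := by
  have emb : Measurable fun q : E × ℝ => ((q.1, v, q.2) : E × S × ℝ) :=
    measurable_fst.prodMk (measurable_const.prodMk measurable_snd)
  have master : ∀ (C D : Set E), MeasurableSet C → MeasurableSet D →
      Measurable fun q : E × ℝ => ENNReal.ofReal (C.indicator (fun _ => (1 : ℝ)) q.1 *
        D.indicator (fun _ => (1 : ℝ)) (q.1 + q.2 • (↑v : E)) * hrK μ q.1 v q.2) :=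
    fun C D hC hD => (hr_masterP hμ hC hD).comp emb
  conv_lhs => rw [lintegral_lintegral_swap (master A B hA hB).aemeasurable]
  conv_rhs => rw [lintegral_lintegral_swap (master B A hB hA).aemeasurable]
  have hφ : Measurable fun h : ℝ => ∫⁻ x : E, ENNReal.ofReal (B.indicator (fun _ => (1 : ℝ)) x *
      A.indicator (fun _ => (1 : ℝ)) (x + h • (↑v : E)) * hrK μ x v h) := by
    have hm : Measurable (Function.uncurry fun (h : ℝ) (x : E) =>
        ENNReal.ofReal (B.indicator (fun _ => (1 : ℝ)) x *
          A.indicator (fun _ => (1 : ℝ)) (x + h • (↑v : E)) * hrK μ x v h)) :=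
      (master B A hB hA).comp (measurable_snd.prodMk measurable_fst)
    exact hm.lintegral_prod_right
  rw [← (Measure.measurePreserving_neg (volume : Measure ℝ)).lintegral_comp hφ]
  refine lintegral_congr fun h => ?_
  rw [← lintegral_add_right_eq_self (fun x : E => ENNReal.ofReal
    (B.indicator (fun _ => (1 : ℝ)) x *
      A.indicator (fun _ => (1 : ℝ)) (x + (-h) • (↑v : E)) * hrK μ x v (-h))) (h • (↑v : E))]
  refine lintegral_congr fun x => ?_
  have hx : x + h • (↑v : E) + (-h) • (↑v : E) = x := by rw [neg_smul]; abel
  rw [hx, hrK_symm]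
  congr 1
  ring


lemma hr_toLintegral {μ : E → ℝ} (hμ : Measurable μ) (hμnn : ∀ x, 0 ≤ μ x) {A B : Set E}
    (hA : MeasurableSet A) (hB : MeasurableSet B)
    (τ : Measure S) [IsProbabilityMeasure τ] :
    (∫ x, ∫ v, ∫ h : ℝ, A.indicator (fun _ => (1 : ℝ)) x *
        B.indicator (fun _ => (1 : ℝ)) (x + h • (↑v : E)) * hrK μ x v h ∂volume ∂τ ∂volume)
    = (∫⁻ x, (∫⁻ v, (∫⁻ h : ℝ, ENNReal.ofReal (A.indicator (fun _ => (1 : ℝ)) x *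
        B.indicator (fun _ => (1 : ℝ)) (x + h • (↑v : E)) * hrK μ x v h)) ∂τ)).toReal := by
  have hnn : ∀ (x : E) (v : S) (h : ℝ), 0 ≤ A.indicator (fun _ => (1 : ℝ)) x *
      B.indicator (fun _ => (1 : ℝ)) (x + h • (↑v : E)) * hrK μ x v h := fun x v h =>
    mul_nonneg (mul_nonneg (indicator_one_nonneg _ _) (indicator_one_nonneg _ _))
      (hrK_nonneg hμnn x v h)
  have hJle : ∀ (x : E) (v : S),
      (∫⁻ h : ℝ, ENNReal.ofReal (A.indicator (fun _ => (1 : ℝ)) x *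
        B.indicator (fun _ => (1 : ℝ)) (x + h • (↑v : E)) * hrK μ x v h))
      ≤ ENNReal.ofReal (μ x) := hr_inner_lintegral_le hμ hμnn A B
  have hJmeas := hrJ_measurable (A := A) (B := B) hμ hA hB
  have h1 : ∀ (x : E) (v : S), (∫ h : ℝ, A.indicator (fun _ => (1 : ℝ)) x *
      B.indicator (fun _ => (1 : ℝ)) (x + h • (↑v : E)) * hrK μ x v h)
      = (∫⁻ h : ℝ, ENNReal.ofReal (A.indicator (fun _ => (1 : ℝ)) x *
        B.indicator (fun _ => (1 : ℝ)) (x + h • (↑v : E)) * hrK μ x v h)).toReal := by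
    intro x v
    refine integral_eq_lintegral_of_nonneg_ae (ae_of_all _ fun h => hnn x v h) ?_
    exact ((hr_masterR hμ hA hB).comp
      (measurable_const.prodMk (measurable_const.prodMk measurable_id))).aestronglyMeasurable
  have h2 : ∀ x : E, (∫ v, ∫ h : ℝ, A.indicator (fun _ => (1 : ℝ)) x *
      B.indicator (fun _ => (1 : ℝ)) (x + h • (↑v : E)) * hrK μ x v h ∂volume ∂τ)
      = (∫⁻ v, (∫⁻ h : ℝ, ENNReal.ofReal (A.indicator (fun _ => (1 : ℝ)) x *
        B.indicator (fun _ => (1 : ℝ)) (x + h • (↑v : E)) * hrK μ x v h)) ∂τ).toReal := by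
    intro x
    simp_rw [h1 x]
    exact integral_toReal ((hJmeas.comp (measurable_const.prodMk measurable_id)).aemeasurable)
      (ae_of_all _ fun v => lt_of_le_of_lt (hJle x v) ENNReal.ofReal_lt_top)
  have hMmeas : Measurable fun x : E => (∫⁻ v, (∫⁻ h : ℝ,
      ENNReal.ofReal (A.indicator (fun _ => (1 : ℝ)) x *
        B.indicator (fun _ => (1 : ℝ)) (x + h • (↑v : E)) * hrK μ x v h)) ∂τ) := by
    have hm : Measurable (Function.uncurry fun (x : E) (v : S) =>
        ∫⁻ h : ℝ, ENNReal.ofReal (A.indicator (fun _ => (1 : ℝ)) x *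
          B.indicator (fun _ => (1 : ℝ)) (x + h • (↑v : E)) * hrK μ x v h)) := hJmeas
    exact hm.lintegral_prod_right
  have hMle : ∀ x : E, (∫⁻ v, (∫⁻ h : ℝ, ENNReal.ofReal (A.indicator (fun _ => (1 : ℝ)) x *
      B.indicator (fun _ => (1 : ℝ)) (x + h • (↑v : E)) * hrK μ x v h)) ∂τ)
      ≤ ENNReal.ofReal (μ x) := by
    intro x
    calc (∫⁻ v, (∫⁻ h : ℝ, ENNReal.ofReal (A.indicator (fun _ => (1 : ℝ)) x *
          B.indicator (fun _ => (1 : ℝ)) (x + h • (↑v : E)) * hrK μ x v h)) ∂τ)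
        ≤ ∫⁻ _, ENNReal.ofReal (μ x) ∂τ := lintegral_mono (hJle x)
      _ = ENNReal.ofReal (μ x) := by simp
  simp_rw [h2]
  exact integral_toReal hMmeas.aemeasurable
    (ae_of_all _ fun x => lt_of_le_of_lt (hMle x) ENNReal.ofReal_lt_top)

end HitAndRunAux

/-- reversibility of the generalized Hit-and-Run transition kernel
with respect to the target measure with density `μ`. -/
theorem generalized_hit_and_run_reversible {d : ℕ} (hd : 1 ≤ d)
    (μ : EuclideanSpace ℝ (Fin d) → ℝ) (hμmeas : Measurable μ)
    (hμnn : ∀ x, 0 ≤ μ x) (hμint : Integrable μ volume)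
    (τ : Measure (Metric.sphere (0 : EuclideanSpace ℝ (Fin d)) 1))
    [IsProbabilityMeasure τ]
    (Z : EuclideanSpace ℝ (Fin d) → Metric.sphere (0 : EuclideanSpace ℝ (Fin d)) 1 → ℝ≥0∞)
    (hZ : ∀ x v, Z x v = ∫⁻ s : ℝ, ENNReal.ofReal (μ (x + s • (↑v : EuclideanSpace ℝ (Fin d)))))
    (K : EuclideanSpace ℝ (Fin d) → Metric.sphere (0 : EuclideanSpace ℝ (Fin d)) 1 → ℝ → ℝ)
    (hK : ∀ x v h, K x v h =
      if 0 < Z x v ∧ Z x v < ⊤ then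
        μ x * μ (x + h • (↑v : EuclideanSpace ℝ (Fin d))) / (Z x v).toReal
      else 0)
    (A B : Set (EuclideanSpace ℝ (Fin d))) (hA : MeasurableSet A) (hB : MeasurableSet B) :
    ∫ x, ∫ v, ∫ h : ℝ,
        A.indicator (fun _ => (1 : ℝ)) x *
          B.indicator (fun _ => (1 : ℝ)) (x + h • (↑v : EuclideanSpace ℝ (Fin d))) *
          K x v h ∂volume ∂τ ∂volume =
      ∫ x, ∫ v, ∫ h : ℝ,
        B.indicator (fun _ => (1 : ℝ)) x *
          A.indicator (fun _ => (1 : ℝ)) (x + h • (↑v : EuclideanSpace ℝ (Fin d))) *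
          K x v h ∂volume ∂τ ∂volume := by
  have hKeq : K = fun x v h => hrK μ x v h := by
    funext x v h
    rw [hK x v h]
    rw [show Z x v = hrZ μ x v from hZ x v]
    rfl
  simp only [hKeq]
  rw [hr_toLintegral hμmeas hμnn hA hB τ, hr_toLintegral hμmeas hμnn hB hA τ]
  congr 1
  have hJA : Measurable (Function.uncurry fun (x : EuclideanSpace ℝ (Fin d))
      (v : Metric.sphere (0 : EuclideanSpace ℝ (Fin d)) 1) =>
      ∫⁻ h : ℝ, ENNReal.ofReal (A.indicator (fun _ => (1 : ℝ)) x *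
        B.indicator (fun _ => (1 : ℝ)) (x + h • (↑v : EuclideanSpace ℝ (Fin d))) *
        hrK μ x v h)) := hrJ_measurable hμmeas hA hB
  have hJB : Measurable (Function.uncurry fun (x : EuclideanSpace ℝ (Fin d))
      (v : Metric.sphere (0 : EuclideanSpace ℝ (Fin d)) 1) =>
      ∫⁻ h : ℝ, ENNReal.ofReal (B.indicator (fun _ => (1 : ℝ)) x *
        A.indicator (fun _ => (1 : ℝ)) (x + h • (↑v : EuclideanSpace ℝ (Fin d))) *
        hrK μ x v h)) := hrJ_measurable hμmeas hB hA
  conv_lhs => rw [lintegral_lintegral_swap hJA.aemeasurable]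
  conv_rhs => rw [lintegral_lintegral_swap hJB.aemeasurable]
  exact lintegral_congr fun v => hr_key hμmeas hμnn hA hB v
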